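/- Let γ = ((i₁ j₁),…,(i_k j_k)) ∈ Σ_n(k). Then the support of the product γ_k = (i₁ j₁)∘⋯∘(i_k j_k) equals {i₁,…,i_k} ∪ {j₁,…,j_k}. -/

import Mathlib

/-- ℓ(σ): the number of cycles (orbits) of σ, including fixed points, counted via the
minimal representative of each orbit. -/
noncomputable def cycleCount {n : ℕ} (σ : Equiv.Perm (Fin n)) : ℕ :=
  Set.ncard {x : Fin n | ∀ y, σ.SameCycle x y → x ≤ y}

/-- |σ| := n − ℓ(σ). -/
noncomputable def normPerm {n : ℕ} (σ : Equiv.Perm (Fin n)) : ℕ := n - cycleCount σ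

/-- σ₁ ≼ σ₂ iff |σ₂| = |σ₁| + |σ₁⁻¹σ₂|. -/
def precLe {n : ℕ} (σ₁ σ₂ : Equiv.Perm (Fin n)) : Prop :=
  normPerm σ₂ = normPerm σ₁ + normPerm (σ₁⁻¹ * σ₂)

/-- Σ_n(k): tuples of k transpositions with |τ₁⋯τ_k| = k and τ₁⋯τ_k ≼ (1 … n). -/
def SigmaSet (n k : ℕ) : Set (Fin k → Equiv.Perm (Fin n)) :=
  {τ | (∀ l, (τ l).IsSwap) ∧ normPerm (List.ofFn τ).prod = k ∧
      precLe (List.ofFn τ).prod (finRotate n)}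

/-- γ_m := τ₁∘⋯∘τ_m, the product of the first m entries of the chain. -/
def gammaP {n k : ℕ} (τ : Fin k → Equiv.Perm (Fin n)) (m : ℕ) : Equiv.Perm (Fin n) :=
  ((List.ofFn τ).take m).prod


open Equiv Equiv.Perm

namespace Stmt13Aux

variable {n : ℕ}

lemma pow_mul_swap_eq {σ : Perm (Fin n)} {a b x : Fin n}
    (ha : ¬σ.SameCycle x a) (hb : ¬σ.SameCycle x b) (m : ℕ) :
    ((σ * Equiv.swap a b) ^ m) x = (σ ^ m) x := by
  induction m with
  | zero => simp
  | succ m ih =>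
    have hne_a : (σ ^ m) x ≠ a := fun h => ha ⟨m, by rw [zpow_natCast, h]⟩
    have hne_b : (σ ^ m) x ≠ b := fun h => hb ⟨m, by rw [zpow_natCast, h]⟩
    rw [pow_succ', mul_apply, ih, pow_succ', mul_apply, mul_apply,
      Equiv.swap_apply_of_ne_of_ne hne_a hne_b]

lemma sc_mul_swap {σ : Perm (Fin n)} {a b x y : Fin n}
    (ha : ¬σ.SameCycle x a) (hb : ¬σ.SameCycle x b) (h : σ.SameCycle x y) :
    (σ * Equiv.swap a b).SameCycle x y := by
  obtain ⟨m, _, hm⟩ := h.exists_pow_eq'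
  exact ⟨m, by rw [zpow_natCast, pow_mul_swap_eq ha hb, hm]⟩

lemma sc_mul_swap' {σ : Perm (Fin n)} {a b x y : Fin n}
    (ha : ¬σ.SameCycle x a) (hb : ¬σ.SameCycle x b)
    (h : (σ * Equiv.swap a b).SameCycle x y) : σ.SameCycle x y := by
  obtain ⟨m, _, hm⟩ := h.exists_pow_eq'
  rw [pow_mul_swap_eq ha hb] at hm
  exact ⟨m, by rw [zpow_natCast, hm]⟩

lemma nat_card_option (β : Type*) [Finite β] : Nat.card (Option β) = Nat.card β + 1 := by
  letI : Fintype β := Fintype.ofFinite β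
  simp [Nat.card_eq_fintype_card]

/-- Key inequality A: multiplying by a swap decreases the number of cycles by at most 1. -/
lemma card_quot_le (σ : Perm (Fin n)) (a b : Fin n) :
    Nat.card (Quotient (SameCycle.setoid σ))
      ≤ Nat.card (Quotient (SameCycle.setoid (σ * Equiv.swap a b))) + 1 := by
  classical
  set π := σ * Equiv.swap a b with hπ
  set f : Quotient (SameCycle.setoid σ) → Option (Quotient (SameCycle.setoid π)) :=
    Quotient.lift
      (fun x => if σ.SameCycle x a then none
        else if σ.SameCycle x b then some (Quotient.mk (SameCycle.setoid π) b)
        else some (Quotient.mk (SameCycle.setoid π) x))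
      (by
        intro x y hxy
        have hxy : σ.SameCycle x y := hxy
        try dsimp only
        by_cases hxa : σ.SameCycle x a
        · rw [if_pos hxa, if_pos (hxy.symm.trans hxa)]
        · have hya : ¬σ.SameCycle y a := fun h => hxa (hxy.trans h)
          rw [if_neg hxa, if_neg hya]
          by_cases hxb : σ.SameCycle x b
          · rw [if_pos hxb, if_pos (hxy.symm.trans hxb)]
          · have hyb : ¬σ.SameCycle y b := fun h => hxb (hxy.trans h)
            rw [if_neg hxb, if_neg hyb]
            exact congrArg some (Quotient.sound (sc_mul_swap hxa hxb hxy)))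
    with hf
  have hinj : Function.Injective f := by
    intro q1 q2
    induction q1 using Quotient.ind with
    | _ x =>
    induction q2 using Quotient.ind with
    | _ y =>
    intro h
    apply Quotient.sound
    by_cases hxa : σ.SameCycle x a <;> by_cases hya : σ.SameCycle y a
    · exact hxa.trans hya.symm
    · simp only [hf, Quotient.lift_mk, if_pos hxa, if_neg hya] at h
      by_cases hyb : σ.SameCycle y b <;> simp [if_pos, if_neg, hyb] at h
    · simp only [hf, Quotient.lift_mk, if_pos hya, if_neg hxa] at h
      by_cases hxb : σ.SameCycle x b <;> simp [if_pos, if_neg, hxb] at h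
    · simp only [hf, Quotient.lift_mk, if_neg hxa, if_neg hya] at h
      by_cases hxb : σ.SameCycle x b <;> by_cases hyb : σ.SameCycle y b
      · exact hxb.trans hyb.symm
      · simp only [if_pos hxb, if_neg hyb, Option.some.injEq] at h
        have : π.SameCycle b y := Quotient.exact h
        exact absurd (sc_mul_swap' hya hyb this.symm) hyb
      · simp only [if_pos hyb, if_neg hxb, Option.some.injEq] at h
        have : π.SameCycle b x := Quotient.exact h.symm
        exact absurd (sc_mul_swap' hxa hxb this.symm).symm fun hh => hxb hh.symm
      · simp only [if_neg hxb, if_neg hyb, Option.some.injEq] at h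
        exact sc_mul_swap' hxa hxb (Quotient.exact h)
  calc Nat.card (Quotient (SameCycle.setoid σ))
      ≤ Nat.card (Option (Quotient (SameCycle.setoid π))) :=
        Nat.card_le_card_of_injective f hinj
    _ = _ := nat_card_option _

end Stmt13Aux

namespace Stmt13Aux
variable {n : ℕ}

/-- Key inequality B: if σ b = a (with a ≠ b) then multiplying by swap a b strictly
increases the number of cycles. -/
lemma card_quot_lt {σ : Perm (Fin n)} {a b : Fin n} (hab : a ≠ b) (hba : σ b = a) :
    Nat.card (Quotient (SameCycle.setoid σ)) + 1
      ≤ Nat.card (Quotient (SameCycle.setoid (σ * Equiv.swap a b))) := by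
  classical
  set π := σ * Equiv.swap a b with hπ
  have hπa : π a = a := by
    simp [hπ, mul_apply, Equiv.swap_apply_left, hba]
  have hπpow : ∀ m : ℕ, (π ^ m) a = a := by
    intro m
    induction m with
    | zero => simp
    | succ m ih => rw [pow_succ', mul_apply, ih, hπa]
  have hnot : ∀ x : Fin n, x ≠ a → ¬π.SameCycle a x := by
    intro x hx h
    obtain ⟨m, _, hm⟩ := h.exists_pow_eq'
    rw [hπpow] at hm
    exact hx hm.symm
  have hba' : σ.SameCycle b a := ⟨1, by simpa using hba⟩
  set g : Option (Quotient (SameCycle.setoid σ)) → Quotient (SameCycle.setoid π) :=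
    fun o => Option.rec (Quotient.mk (SameCycle.setoid π) a)
      (Quotient.lift
        (fun x => if σ.SameCycle x a then Quotient.mk (SameCycle.setoid π) b
          else Quotient.mk (SameCycle.setoid π) x)
        (by
          intro x y hxy
          have hxy : σ.SameCycle x y := hxy
          try dsimp only
          by_cases hxa : σ.SameCycle x a
          · rw [if_pos hxa, if_pos (hxy.symm.trans hxa)]
          · have hya : ¬σ.SameCycle y a := fun h => hxa (hxy.trans h)
            have hxb : ¬σ.SameCycle x b := fun h => hxa (h.trans hba')
            rw [if_neg hxa, if_neg hya]
            exact Quotient.sound (sc_mul_swap hxa hxb hxy))) o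
    with hg
  have hinj : Function.Injective g := by
    intro o1 o2
    match o1, o2 with
    | none, none => intro _; rfl
    | none, some q =>
      induction q using Quotient.ind with
      | _ x =>
        intro h
        exfalso
        simp only [hg, Quotient.lift_mk] at h
        by_cases hxa : σ.SameCycle x a
        · rw [if_pos hxa] at h
          exact hnot b (Ne.symm hab) (Quotient.exact h)
        · rw [if_neg hxa] at h
          have hxna : x ≠ a := fun hh => hxa (hh ▸ SameCycle.refl σ x)
          exact hnot x hxna (Quotient.exact h)
    | some q, none =>
      induction q using Quotient.ind with
      | _ x =>
        intro h
        exfalso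
        simp only [hg, Quotient.lift_mk] at h
        by_cases hxa : σ.SameCycle x a
        · rw [if_pos hxa] at h
          exact hnot b (Ne.symm hab) (Quotient.exact h.symm)
        · rw [if_neg hxa] at h
          have hxna : x ≠ a := fun hh => hxa (hh ▸ SameCycle.refl σ x)
          exact hnot x hxna (Quotient.exact h.symm)
    | some q1, some q2 =>
      induction q1 using Quotient.ind with
      | _ x =>
      induction q2 using Quotient.ind with
      | _ y =>
        intro h
        simp only [hg, Quotient.lift_mk] at h
        congr 1
        apply Quotient.sound
        by_cases hxa : σ.SameCycle x a <;> by_cases hya : σ.SameCycle y a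
        · exact hxa.trans hya.symm
        · rw [if_pos hxa, if_neg hya] at h
          have hyb : ¬σ.SameCycle y b := fun hh => hya (hh.trans hba')
          have : π.SameCycle y b := (Quotient.exact h).symm
          exact absurd (sc_mul_swap' hya hyb this) hyb
        · rw [if_pos hya, if_neg hxa] at h
          have hxb : ¬σ.SameCycle x b := fun hh => hxa (hh.trans hba')
          have : π.SameCycle x b := Quotient.exact h
          exact absurd (sc_mul_swap' hxa hxb this) hxb
        · rw [if_neg hxa, if_neg hya] at h
          have hxb : ¬σ.SameCycle x b := fun hh => hxa (hh.trans hba')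
          exact sc_mul_swap' hxa hxb (Quotient.exact h)
  calc Nat.card (Quotient (SameCycle.setoid σ)) + 1
      = Nat.card (Option (Quotient (SameCycle.setoid σ))) := (nat_card_option _).symm
    _ ≤ _ := Nat.card_le_card_of_injective g hinj

end Stmt13Aux


namespace Stmt13Aux
open Equiv Equiv.Perm
variable {n : ℕ}
lemma cycleCount_eq_card (σ : Perm (Fin n)) :
    Set.ncard {x : Fin n | ∀ y, σ.SameCycle x y → x ≤ y}
      = Nat.card (Quotient (SameCycle.setoid σ)) := by
  classical
  rw [← Nat.card_coe_set_eq]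
  apply Nat.card_eq_of_bijective
    (fun x : {x : Fin n | ∀ y, σ.SameCycle x y → x ≤ y} =>
      (Quotient.mk (SameCycle.setoid σ) x.1))
  constructor
  · rintro ⟨x, hx⟩ ⟨y, hy⟩ hxy
    have h : σ.SameCycle x y := Quotient.exact hxy
    exact Subtype.ext (le_antisymm (hx y h) (hy x h.symm))
  · intro q
    induction q using Quotient.ind with
    | _ y =>
      set F : Finset (Fin n) := Finset.univ.filter (fun z => σ.SameCycle y z) with hF
      have hyF : y ∈ F := by simp [hF]; exact SameCycle.refl σ y
      have hne : F.Nonempty := ⟨y, hyF⟩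
      set m := F.min' hne with hm
      have hmF : m ∈ F := F.min'_mem hne
      have hym : σ.SameCycle y m := by simpa [hF] using hmF
      refine ⟨⟨m, ?_⟩, ?_⟩
      · intro z hz
        have hzF : z ∈ F := by simp [hF]; exact hym.trans hz
        exact F.min'_le z hzF
      · exact Quotient.sound hym.symm

end Stmt13Aux

namespace Stmt13Aux

open Equiv Equiv.Perm

variable {n : ℕ}

lemma cc_eq (σ : Equiv.Perm (Fin n)) :
    cycleCount σ = Nat.card (Quotient (SameCycle.setoid σ)) := by
  rw [cycleCount]; exact cycleCount_eq_card σ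

lemma cycleCount_one : cycleCount (1 : Perm (Fin n)) = n := by
  have : {x : Fin n | ∀ y, (1 : Perm (Fin n)).SameCycle x y → x ≤ y} = Set.univ := by
    ext x
    simp only [Set.mem_setOf_eq, Set.mem_univ, iff_true]
    intro y h
    rw [sameCycle_one] at h
    exact le_of_eq h
  rw [cycleCount, this, Set.ncard_univ, Nat.card_eq_fintype_card, Fintype.card_fin]

lemma cycleCount_le (σ : Perm (Fin n)) : cycleCount σ ≤ n := by
  rw [cycleCount]
  calc Set.ncard {x : Fin n | ∀ y, σ.SameCycle x y → x ≤ y}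
      ≤ Set.ncard (Set.univ : Set (Fin n)) :=
        Set.ncard_le_ncard (Set.subset_univ _) Set.finite_univ
    _ = n := by rw [Set.ncard_univ, Nat.card_eq_fintype_card, Fintype.card_fin]

lemma cycleCount_step (σ : Perm (Fin n)) (a b : Fin n) :
    cycleCount σ ≤ cycleCount (σ * Equiv.swap a b) + 1 := by
  rw [cc_eq, cc_eq]; exact card_quot_le σ a b

lemma support_mul_swap {σ : Perm (Fin n)} {a b : Fin n} (hab : a ≠ b)
    (hlt : cycleCount (σ * Equiv.swap a b) < cycleCount σ) :
    (σ * Equiv.swap a b).support = σ.support ∪ {a, b} := by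
  have h1 : σ b ≠ a := by
    intro h
    have := card_quot_lt hab h
    rw [← cc_eq, ← cc_eq] at this
    omega
  have h2 : σ a ≠ b := by
    intro h
    have := card_quot_lt (Ne.symm hab) h
    rw [← cc_eq, ← cc_eq, ← Equiv.swap_comm] at this
    omega
  ext x
  simp only [Finset.mem_union, Finset.mem_insert, Finset.mem_singleton, mem_support]
  constructor
  · intro hx
    by_cases hxa : x = a
    · exact Or.inr (Or.inl hxa)
    by_cases hxb : x = b
    · exact Or.inr (Or.inr hxb)
    · left
      rwa [mul_apply, Equiv.swap_apply_of_ne_of_ne hxa hxb] at hx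
  · rintro (hx | rfl | rfl)
    · by_cases hxa : x = a
      · subst hxa; rw [mul_apply, Equiv.swap_apply_left]; exact h1
      by_cases hxb : x = b
      · subst hxb; rw [mul_apply, Equiv.swap_apply_right]; exact h2
      · rw [mul_apply, Equiv.swap_apply_of_ne_of_ne hxa hxb]; exact hx
    · rw [mul_apply, Equiv.swap_apply_left]; exact h1
    · rw [mul_apply, Equiv.swap_apply_right]; exact h2

end Stmt13Aux


open Stmt13Aux

/-- If γ = ((i₁ j₁),…,(i_k j_k)) ∈ Σ_n(k), the support of γ_k = (i₁ j₁)∘⋯∘(i_k j_k) is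
{i₁,…,i_k} ∪ {j₁,…,j_k}. -/
theorem stmt13 (n k : ℕ) (i j : Fin k → Fin n) (hij : ∀ l, i l < j l)
    (hγ : (fun l => Equiv.swap (i l) (j l)) ∈ SigmaSet n k) :
    ((List.ofFn fun l => Equiv.swap (i l) (j l)).prod).support =
      Finset.image i Finset.univ ∪ Finset.image j Finset.univ := by
  classical
  obtain ⟨-, hnorm, -⟩ := hγ
  set τ : Fin k → Equiv.Perm (Fin n) := fun l => Equiv.swap (i l) (j l) with hτ
  set L : List (Equiv.Perm (Fin n)) := List.ofFn τ with hL
  set g : ℕ → Equiv.Perm (Fin n) := fun m => (L.take m).prod with hg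
  have hLlen : L.length = k := by simp [hL]
  have hg0 : g 0 = 1 := by simp [hg]
  have hgk : g k = L.prod := by
    show (L.take k).prod = L.prod
    rw [← hLlen, List.take_length]
  have hstep : ∀ (m : ℕ) (hm : m < k), g (m + 1) = g m * τ ⟨m, hm⟩ := by
    intro m hm
    have hm' : m < L.length := by omega
    show (L.take (m+1)).prod = (L.take m).prod * _
    rw [List.prod_take_succ L m hm']
    congr 1
    simp [hL]
  -- total cycle count
  have hcck : cycleCount (g k) = n - k ∧ k ≤ n := by
    have h1 : normPerm (g k) = k := by rw [hgk]; exact hnorm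
    have h2 := cycleCount_le (g k)
    rw [normPerm] at h1
    omega
  obtain ⟨hcck1, hcck2⟩ := hcck
  -- lower bound: n ≤ cycleCount (g m) + m
  have hlow : ∀ m, n ≤ cycleCount (g m) + m := by
    intro m
    induction m with
    | zero => simp [hg0, cycleCount_one]
    | succ m ih =>
      by_cases hm : m < k
      · have := cycleCount_step (g m) (i ⟨m, hm⟩) (j ⟨m, hm⟩)
        rw [← hstep m hm] at this
        omega
      · have : g (m + 1) = g m := by
          show (L.take (m+1)).prod = (L.take m).prod
          rw [List.take_of_length_le (by omega), List.take_of_length_le (by omega)]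
        rw [this]; omega
  -- upper bound going backwards: cycleCount (g m) ≤ n - m for m ≤ k
  have hup : ∀ d m, m + d = k → cycleCount (g m) + m ≤ n := by
    intro d
    induction d with
    | zero =>
      intro m hm
      have hmk : m = k := by omega
      subst hmk
      omega
    | succ d ih =>
      intro m hm
      have hmk : m < k := by omega
      have h1 := ih (m + 1) (by omega)
      have h2 := cycleCount_step (g m) (i ⟨m, hmk⟩) (j ⟨m, hmk⟩)
      rw [← hstep m hmk] at h2
      omega
  have hcc : ∀ m, m ≤ k → cycleCount (g m) = n - m := by
    intro m hm
    have := hlow m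
    have := hup (k - m) m (by omega)
    omega
  -- support induction
  have hsupp : ∀ m, m ≤ k →
      (g m).support = ((Finset.univ.filter (fun l : Fin k => (l : ℕ) < m)).image i) ∪
        ((Finset.univ.filter (fun l : Fin k => (l : ℕ) < m)).image j) := by
    intro m hm
    induction m with
    | zero =>
      rw [hg0]
      simp
    | succ m ih =>
      have hmk : m < k := by omega
      have ih' := ih (by omega)
      have hdrop : cycleCount (g m * τ ⟨m, hmk⟩) < cycleCount (g m) := by
        have e1 := hcc m (by omega)
        have e2 := hcc (m+1) hm
        rw [hstep m hmk] at e2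
        omega
      have hne : i ⟨m, hmk⟩ ≠ j ⟨m, hmk⟩ := ne_of_lt (hij _)
      have hs : (g m * τ ⟨m, hmk⟩).support
          = (g m).support ∪ {i ⟨m, hmk⟩, j ⟨m, hmk⟩} := support_mul_swap hne hdrop
      rw [hstep m hmk, hs, ih']
      ext x
      simp only [Finset.mem_union, Finset.mem_image, Finset.mem_filter, Finset.mem_univ,
        true_and, Finset.mem_insert, Finset.mem_singleton]
      constructor
      · rintro ((⟨l, hl, rfl⟩ | ⟨l, hl, rfl⟩) | rfl | rfl)
        · exact Or.inl ⟨l, by omega, rfl⟩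
        · exact Or.inr ⟨l, by omega, rfl⟩
        · exact Or.inl ⟨⟨m, hmk⟩, Nat.lt_succ_self m, rfl⟩
        · exact Or.inr ⟨⟨m, hmk⟩, Nat.lt_succ_self m, rfl⟩
      · rintro (⟨l, hl, rfl⟩ | ⟨l, hl, rfl⟩)
        · rcases Nat.lt_succ_iff_lt_or_eq.mp hl with h | h
          · exact Or.inl (Or.inl ⟨l, h, rfl⟩)
          · exact Or.inr (Or.inl (congrArg i (Fin.ext h)))
        · rcases Nat.lt_succ_iff_lt_or_eq.mp hl with h | h
          · exact Or.inl (Or.inr ⟨l, h, rfl⟩)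
          · exact Or.inr (Or.inr (congrArg j (Fin.ext h)))
  have hfin := hsupp k le_rfl
  have hfilter : (Finset.univ.filter (fun l : Fin k => (l : ℕ) < k)) = Finset.univ := by
    ext l; simp [l.isLt]
  rw [hfilter] at hfin
  rw [← hgk]
  exact hfin
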